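/- If r < T_k(a), then F_r(u) < u for all u ∈ ℝ; if r > T_k(a), then there exists u with F_r(u) > u; and if r = T_k(a), then F_r(u) = u exactly for u ∈ [a↓_{k+1}, a↓_k] (with a↓_{n+1} := −∞), and F_r(u) < u otherwise. -/

import Mathlib

open Finset

/-- The entries of `a` rearranged in nonincreasing order. -/
noncomputable def sortDesc (n : ℕ) (a : Fin n → ℝ) : Fin n → ℝ :=
  fun i => a (Tuple.sort a i.rev)

/-- The sum of the `k` largest entries of `a`. -/
noncomputable def topKSum (n k : ℕ) (a : Fin n → ℝ) : ℝ :=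
  ∑ i : Fin n, if (i : ℕ) < k then sortDesc n a i else 0
/-- The relaxed function `F_r`. -/
noncomputable def Fr (n k : ℕ) (r : ℝ) (a : Fin n → ℝ) : ℝ → ℝ :=
  fun u => (1 / (k : ℝ)) * (r - ∑ i : Fin n, max (a i - u) 0)

/-- Auxiliary "defect" function. -/
noncomputable def DD (n k : ℕ) (a : Fin n → ℝ) (u : ℝ) : ℝ :=
  ∑ i : Fin n, (max (sortDesc n a i - u) 0 -
    if (i : ℕ) < k then sortDesc n a i - u else 0)

lemma sortDesc_anti (n : ℕ) (a : Fin n → ℝ) : Antitone (sortDesc n a) :=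
  fun i j hij => Tuple.monotone_sort a (Fin.rev_le_rev.mpr hij)

lemma sum_comp_sortDesc (n : ℕ) (a : Fin n → ℝ) (f : ℝ → ℝ) :
    ∑ i : Fin n, f (sortDesc n a i) = ∑ i : Fin n, f (a i) :=
  Fintype.sum_equiv (Fin.revPerm.trans (Tuple.sort a)) _ _ (fun _ => rfl)

lemma sum_ite_lt_const (n k : ℕ) (hk : k ≤ n) (u : ℝ) :
    ∑ i : Fin n, (if (i : ℕ) < k then u else 0) = k * u := by
  have hf : (Finset.range n).filter (fun i => i < k) = Finset.range k := by
    ext i; simp; omega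
  rw [Fin.sum_univ_eq_sum_range (fun i => if i < k then u else 0) n,
    Finset.sum_ite, Finset.sum_const_zero, add_zero, Finset.sum_const, hf,
    Finset.card_range, nsmul_eq_mul]

lemma sum_max_eq (n k : ℕ) (hk : k ≤ n) (a : Fin n → ℝ) (u : ℝ) :
    ∑ i : Fin n, max (a i - u) 0 = topKSum n k a - k * u + DD n k a u := by
  rw [← sum_comp_sortDesc n a (fun x => max (x - u) 0)]
  have h1 : ∑ i : Fin n, (if (i : ℕ) < k then sortDesc n a i - u else 0)
      = topKSum n k a - k * u := by
    have : ∀ i : Fin n, (if (i : ℕ) < k then sortDesc n a i - u else 0)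
        = (if (i : ℕ) < k then sortDesc n a i else 0) -
          (if (i : ℕ) < k then u else 0) := by
      intro i; split <;> simp
    rw [Finset.sum_congr rfl (fun i _ => this i), Finset.sum_sub_distrib,
      sum_ite_lt_const n k hk u, topKSum]
  rw [DD, Finset.sum_sub_distrib, h1]
  ring

lemma DD_nonneg (n k : ℕ) (a : Fin n → ℝ) (u : ℝ) : 0 ≤ DD n k a u := by
  apply Finset.sum_nonneg
  intro i _
  by_cases hi : (i : ℕ) < k
  · simp only [hi, if_pos]
    have := le_max_left (sortDesc n a i - u) 0
    linarith
  · simp only [hi, if_neg, not_false_iff]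
    have := le_max_right (sortDesc n a i - u) 0
    linarith

lemma DD_eq_zero_iff (n k : ℕ) (hk1 : 1 ≤ k) (hk2 : k ≤ n) (a : Fin n → ℝ) (u : ℝ) :
    DD n k a u = 0 ↔
      ((∀ h : k < n, sortDesc n a ⟨k, h⟩ ≤ u) ∧
        u ≤ sortDesc n a ⟨k - 1, Nat.lt_of_lt_of_le (Nat.sub_lt hk1 Nat.one_pos) hk2⟩) := by
  have hterm : ∀ i ∈ Finset.univ, (0:ℝ) ≤ max (sortDesc n a i - u) 0 -
      if (i : ℕ) < k then sortDesc n a i - u else 0 := by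
    intro i _
    by_cases hi : (i : ℕ) < k
    · simp only [hi, if_pos]
      have := le_max_left (sortDesc n a i - u) 0
      linarith
    · simp only [hi, if_neg, not_false_iff]
      have := le_max_right (sortDesc n a i - u) 0
      linarith
  rw [DD, Finset.sum_eq_zero_iff_of_nonneg hterm]
  constructor
  · intro h
    constructor
    · intro hkn
      have hk' := h ⟨k, hkn⟩ (Finset.mem_univ _)
      simp only [lt_irrefl, if_false, sub_zero] at hk'
      have h2 : sortDesc n a ⟨k, hkn⟩ - u ≤ max (sortDesc n a ⟨k, hkn⟩ - u) 0 :=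
        le_max_left _ _
      rw [hk'] at h2
      linarith
    · have hlt : k - 1 < n := by omega
      have hk' := h ⟨k - 1, hlt⟩ (Finset.mem_univ _)
      have hik : ((⟨k - 1, hlt⟩ : Fin n) : ℕ) < k := by simp; omega
      simp only [hik, if_pos] at hk'
      have h2 : (0:ℝ) ≤ max (sortDesc n a ⟨k - 1, hlt⟩ - u) 0 := le_max_right _ _
      have h3 : max (sortDesc n a ⟨k - 1, hlt⟩ - u) 0 =
          sortDesc n a ⟨k - 1, hlt⟩ - u := by linarith
      rw [h3] at h2
      linarith
  · rintro ⟨h1, h2⟩ i _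
    by_cases hi : (i : ℕ) < k
    · have hle : i ≤ (⟨k - 1, by omega⟩ : Fin n) := by
        rw [Fin.le_def]; simp; omega
      have : u ≤ sortDesc n a i := le_trans h2 (sortDesc_anti n a hle)
      simp only [hi, if_pos]
      rw [max_eq_left (by linarith)]
      ring
    · have hkn : k < n := lt_of_le_of_lt (not_lt.mp hi) i.isLt
      have hle : (⟨k, hkn⟩ : Fin n) ≤ i := by
        rw [Fin.le_def]; simp; omega
      have : sortDesc n a i ≤ u := le_trans (sortDesc_anti n a hle) (h1 hkn)
      simp only [hi, if_neg, not_false_iff]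
      rw [max_eq_right (by linarith)]
      ring

/-- If `r < T_k(a)` then `F_r(u) < u` everywhere; if `r > T_k(a)` then `F_r(u) > u`
for some `u`; and if `r = T_k(a)` then `F_r(u) = u` exactly on `[a↓_{k+1}, a↓_k]`
(with `a↓_{n+1} = −∞`). -/
theorem stmt10 (n k : ℕ) (hn : 1 ≤ n) (hk1 : 1 ≤ k) (hk2 : k ≤ n) (r : ℝ)
    (a : Fin n → ℝ) :
    (r < topKSum n k a → ∀ u : ℝ, Fr n k r a u < u) ∧
    (topKSum n k a < r → ∃ u : ℝ, u < Fr n k r a u) ∧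
    (r = topKSum n k a → ∀ u : ℝ,
      (Fr n k r a u = u ↔
        ((∀ h : k < n, sortDesc n a ⟨k, h⟩ ≤ u) ∧ u ≤ sortDesc n a ⟨k - 1, by omega⟩))) := by
  have hkpos : (0:ℝ) < k := by exact_mod_cast hk1
  have hFr : ∀ u : ℝ, Fr n k r a u - u =
      (1 / (k : ℝ)) * (r - topKSum n k a - DD n k a u) := by
    intro u
    rw [Fr, sum_max_eq n k hk2 a u]
    field_simp
    ring
  refine ⟨?_, ?_, ?_⟩
  · intro hr u
    have hD := DD_nonneg n k a u
    have : Fr n k r a u - u < 0 := by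
      rw [hFr u]
      apply mul_neg_of_pos_of_neg (by positivity)
      linarith
    linarith
  · intro hr
    by_cases hkn : k < n
    · refine ⟨sortDesc n a ⟨k, hkn⟩, ?_⟩
      have hD : DD n k a (sortDesc n a ⟨k, hkn⟩) = 0 := by
        rw [DD_eq_zero_iff n k hk1 hk2]
        refine ⟨fun _ => le_refl _, ?_⟩
        apply sortDesc_anti n a
        rw [Fin.le_def]; simp
      have : 0 < Fr n k r a (sortDesc n a ⟨k, hkn⟩) - sortDesc n a ⟨k, hkn⟩ := by
        rw [hFr, hD]
        apply mul_pos (by positivity)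
        linarith
      linarith
    · refine ⟨sortDesc n a ⟨k - 1, by omega⟩, ?_⟩
      have hD : DD n k a (sortDesc n a ⟨k - 1, by omega⟩) = 0 := by
        rw [DD_eq_zero_iff n k hk1 hk2]
        exact ⟨fun h => absurd h hkn, le_refl _⟩
      have : 0 < Fr n k r a (sortDesc n a ⟨k - 1, by omega⟩) -
          sortDesc n a ⟨k - 1, by omega⟩ := by
        rw [hFr, hD]
        apply mul_pos (by positivity)
        linarith
      linarith
  · intro hr u
    rw [← DD_eq_zero_iff n k hk1 hk2 a u]
    constructor
    · intro h
      have h0 : (1 / (k:ℝ)) * (r - topKSum n k a - DD n k a u) = 0 := by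
        rw [← hFr u, h]; ring
      have h1 : r - topKSum n k a - DD n k a u = 0 := by
        rcases mul_eq_zero.mp h0 with h' | h'
        · exact absurd h' (by positivity)
        · exact h'
      rw [hr] at h1
      linarith
    · intro h
      have : Fr n k r a u - u = 0 := by
        rw [hFr u, hr, h]; ring
      linarith
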